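/- For every integer m ≥ 2, the product of 2×2 integer matrices ∏_{i=1}^{m−1} [[(−1)^i·2, 1],[1,0]] applied to the column vector (1,0)ᵀ equals (−1)^{⌊m/2⌋}·(m, 1−m)ᵀ. In particular the continued fraction [−2, 2, −2, …, (−1)^{m−1}·2] of length m−1 equals m/(1−m), which is a Schubert fraction of the torus link T(2,m) = C(m). -/

import Mathlib

open Matrix

lemma aux_prod (k : ℕ) :
    (List.ofFn fun i : Fin k =>
        (!![(-1) ^ ((i : ℕ) + 1) * 2, 1; 1, 0] : Matrix (Fin 2) (Fin 2) ℤ)).prod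
    = !![(-1)^((k+1)/2) * ((k:ℤ)+1), (-1)^(k/2) * (k:ℤ);
         (-1)^((k+1)/2) * (-(k:ℤ)), (-1)^(k/2) * (1-(k:ℤ))] := by
  induction k with
  | zero =>
      simp only [List.ofFn_zero, List.prod_nil]
      ext i j
      fin_cases i <;> fin_cases j <;> simp
  | succ k ih =>
      rw [List.ofFn_succ', List.concat_eq_append, List.prod_append]
      simp only [List.prod_cons, List.prod_nil, mul_one, Fin.coe_castSucc, Fin.val_last]
      rw [ih]
      rw [show ((k:ℕ)+1+1)/2 = k/2 + 1 by omega]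
      rcases Nat.even_or_odd k with ⟨n, hn⟩ | ⟨n, hn⟩
      · subst hn
        rw [show (n+n+1)/2 = n by omega, show (n+n)/2 = n by omega,
            show (-1:ℤ)^(n+n+1) = -1 by rw [pow_succ, ← two_mul]; simp [pow_mul]]
        ext i j
        fin_cases i <;> fin_cases j <;>
          simp [Matrix.mul_apply, Fin.sum_univ_two] <;> ring
      · subst hn
        rw [show (2*n+1+1)/2 = n+1 by omega, show (2*n+1)/2 = n by omega,
            show (-1:ℤ)^(2*n+1+1) = 1 by rw [show 2*n+1+1 = 2*(n+1) by ring]; simp [pow_mul]]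
        ext i j
        fin_cases i <;> fin_cases j <;>
          simp [Matrix.mul_apply, Fin.sum_univ_two, pow_succ] <;> ring

/-- For every `m ≥ 2`, the product `∏_{i=1}^{m-1} [[(-1)^i·2, 1],[1,0]]`
applied to `(1,0)ᵀ` equals `(-1)^⌊m/2⌋ · (m, 1-m)ᵀ`; i.e. the continued fraction
`[-2, 2, -2, …, (-1)^{m-1}·2]` of length `m-1` equals `m/(1-m)`,
a Schubert fraction of the torus link `T(2,m) = C(m)`. -/
theorem torus_link_even_continued_fraction (m : ℕ) (hm : 2 ≤ m) :
    (List.ofFn fun i : Fin (m - 1) =>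
        (!![(-1) ^ ((i : ℕ) + 1) * 2, 1; 1, 0] : Matrix (Fin 2) (Fin 2) ℤ)).prod
      *ᵥ ![1, 0] = (-1) ^ (m / 2) • ![(m : ℤ), 1 - (m : ℤ)] := by
  rw [aux_prod, show (m-1+1)/2 = m/2 by omega]
  have h1 : ((m - 1 : ℕ) : ℤ) = (m : ℤ) - 1 := by
    push_cast [Nat.cast_sub (by omega : 1 ≤ m)]; ring
  ext i
  fin_cases i <;>
    simp [Matrix.mulVec, dotProduct, Fin.sum_univ_two, h1] <;> ring
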